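/- Let φ and ψ be states on unital C*-algebras A and B respectively, with ψ pure, and consider the product state ω = φ ⊗ ψ on A ⊗ B with GNS representation π = π_φ ⊗ π_ψ on H_φ ⊗ H_ψ. Let ρ, σ be representations of A on H_φ with ranges in π_φ(A)''. Define representations ρ̂, σ̂ of A ⊗ B on H_φ ⊗ H_ψ by ρ̂(a ⊗ b) = ρ(a) ⊗ π_ψ(b) and similarly for σ̂. Then the intertwiner space {S ∈ π(A ⊗ B)'' : S ρ̂(x) = σ̂(x) S for all x ∈ A ⊗ B, σ̂(1) S ρ̂(1) = S} equals {R ⊗ 1 : R ∈ π_φ(A)'', R ρ(a) = σ(a) R for all a ∈ A, σ(1) R ρ(1) = R}. -/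

import Mathlib

/- STATEMENT 11: for a product state ω = φ ⊗ ψ with ψ pure (equivalently, with irreducible
GNS representation π_ψ), and (possibly non-unital) representations ρ, σ of A on H_φ with
ranges in π_φ(A)'"'"''"'"', the intertwiner space between the stabilized representations
ρ̂ = ρ ⊗ π_ψ and σ̂ = σ ⊗ π_ψ inside π(A ⊗ B)'"'"''"'"' equals the image under x ↦ x ⊗ 1 of the
intertwiner space between ρ and σ inside π_φ(A)'"'"''"'"'. -/

noncomputable section

/-- A spatial realization of the Hilbert space tensor product of `H` and `K` on `L`,
together with the two amplification `*`-homomorphisms `x ↦ x ⊗ 1` and `y ↦ 1 ⊗ y`. -/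
structure HilbertTensor (H K L : Type*)
    [NormedAddCommGroup H] [InnerProductSpace ℂ H] [CompleteSpace H]
    [NormedAddCommGroup K] [InnerProductSpace ℂ K] [CompleteSpace K]
    [NormedAddCommGroup L] [InnerProductSpace ℂ L] [CompleteSpace L] where
  tp : H →ₗ[ℂ] K →ₗ[ℂ] L
  inner_tp : ∀ (h h' : H) (k k' : K),
    (inner ℂ (tp h k) (tp h' k') : ℂ) = (inner ℂ h h' : ℂ) * (inner ℂ k k' : ℂ)
  dense_span : Dense (Submodule.span ℂ {z : L | ∃ h k, z = tp h k} : Set L)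
  lAct : (H →L[ℂ] H) →⋆ₐ[ℂ] (L →L[ℂ] L)
  rAct : (K →L[ℂ] K) →⋆ₐ[ℂ] (L →L[ℂ] L)
  lAct_tp : ∀ (x : H →L[ℂ] H) (h : H) (k : K), lAct x (tp h k) = tp (x h) k
  rAct_tp : ∀ (y : K →L[ℂ] K) (h : H) (k : K), rAct y (tp h k) = tp h (y k)

namespace HilbertTensor

variable {H K L : Type*}
    [NormedAddCommGroup H] [InnerProductSpace ℂ H] [CompleteSpace H]
    [NormedAddCommGroup K] [InnerProductSpace ℂ K] [CompleteSpace K]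
    [NormedAddCommGroup L] [InnerProductSpace ℂ L] [CompleteSpace L]
    (T : HilbertTensor H K L)

lemma norm_tp (h : H) (k : K) : ‖T.tp h k‖ = ‖h‖ * ‖k‖ := by
  have h1 := T.inner_tp h h k k
  rw [inner_self_eq_norm_sq_to_K, inner_self_eq_norm_sq_to_K, inner_self_eq_norm_sq_to_K,
    ← mul_pow] at h1
  have h2 : ‖T.tp h k‖ ^ 2 = (‖h‖ * ‖k‖) ^ 2 := by exact_mod_cast h1
  nlinarith [norm_nonneg (T.tp h k), norm_nonneg h, norm_nonneg k,
    mul_nonneg (norm_nonneg h) (norm_nonneg k)]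

/-- `h ↦ tp h k` as a continuous linear map. -/
def tpL (k : K) : H →L[ℂ] L :=
  LinearMap.mkContinuous (T.tp.flip k) ‖k‖ fun h => by
    rw [LinearMap.flip_apply, T.norm_tp, mul_comm]

@[simp] lemma tpL_apply (k : K) (h : H) : T.tpL k h = T.tp h k := rfl

/-- `k ↦ tp h k` as a continuous linear map. -/
def tpR (h : H) : K →L[ℂ] L :=
  LinearMap.mkContinuous (T.tp h) ‖h‖ fun k => by rw [T.norm_tp]

@[simp] lemma tpR_apply (h : H) (k : K) : T.tpR h k = T.tp h k := rfl

/-- Two continuous linear maps on `L` agree if they agree against elementary tensors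
in both slots. -/
lemma ext_tp {S S' : L →L[ℂ] L}
    (hin : ∀ (h h' : H) (k k' : K),
      (inner ℂ (T.tp h k) (S (T.tp h' k')) : ℂ) = (inner ℂ (T.tp h k) (S' (T.tp h' k')) : ℂ)) :
    S = S' := by
  apply ContinuousLinearMap.ext_on T.dense_span
  rintro z ⟨h', k', rfl⟩
  apply Dense.eq_of_inner_right ℂ T.dense_span
  intro v hv
  induction hv using Submodule.span_induction with
  | mem u hu => obtain ⟨h, k, rfl⟩ := hu; exact hin h h' k k'
  | zero => simp
  | add u w _ _ hu hw => simp only [inner_add_left, hu, hw]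
  | smul c u _ hu => simp only [inner_smul_left, hu]

lemma lr_comm (x : H →L[ℂ] H) (y : K →L[ℂ] K) :
    T.lAct x * T.rAct y = T.rAct y * T.lAct x := by
  apply ContinuousLinearMap.ext_on T.dense_span
  rintro z ⟨h, k, rfl⟩
  simp [ContinuousLinearMap.mul_apply, T.lAct_tp, T.rAct_tp]

/-- The slice map: compression of an operator on `L` to `H` along the vector `e : K`. -/
def slice (e : K) (S : L →L[ℂ] L) : H →L[ℂ] H :=
  ContinuousLinearMap.adjoint (T.tpL e) ∘L S ∘L T.tpL e

lemma slice_inner (e : K) (S : L →L[ℂ] L) (h h' : H) :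
    (inner ℂ h (T.slice e S h') : ℂ) = (inner ℂ (T.tp h e) (S (T.tp h' e)) : ℂ) := by
  simp only [slice, ContinuousLinearMap.comp_apply]
  rw [ContinuousLinearMap.adjoint_inner_right]
  rfl

lemma inner_lAct (R : H →L[ℂ] H) (h h' : H) (k k' : K) :
    (inner ℂ (T.tp h k) (T.lAct R (T.tp h' k')) : ℂ)
      = (inner ℂ h (R h') : ℂ) * (inner ℂ k k' : ℂ) := by
  rw [T.lAct_tp, T.inner_tp]

/-- Injectivity of `lAct` given a unit vector in `K`. -/
lemma lAct_injective {e : K} (he : (inner ℂ e e : ℂ) = 1) {R R' : H →L[ℂ] H}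
    (hRR : T.lAct R = T.lAct R') : R = R' := by
  ext h'
  apply ext_inner_left ℂ
  intro h
  have := congrArg (fun W : L →L[ℂ] L => (inner ℂ (T.tp h e) (W (T.tp h' e)) : ℂ)) hRR
  simpa only [inner_lAct, he, mul_one] using this

/-- Core lemma: if `S` commutes with `rAct m` for all `m` in a star-closed set `M`
whose centralizer consists of scalars, then `S = lAct R` for `R` the slice of `S`
along any unit vector. -/
lemma eq_lAct_slice {M : Set (K →L[ℂ] K)}
    (hpure : Set.centralizer M ⊆ {y : K →L[ℂ] K | ∃ c : ℂ, y = c • (1 : K →L[ℂ] K)})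
    {e : K} (he : (inner ℂ e e : ℂ) = 1)
    {S : L →L[ℂ] L} (hS : ∀ m ∈ M, S * T.rAct m = T.rAct m * S) :
    S = T.lAct (T.slice e S) := by
  have key : ∀ (h h' : H) (k k' : K),
      (inner ℂ (T.tp h k) (S (T.tp h' k')) : ℂ)
        = (inner ℂ h (T.slice e S h') : ℂ) * (inner ℂ k k' : ℂ) := by
    intro h h' k k'
    -- the slice operator along h, h'
    set Y : K →L[ℂ] K :=
      ContinuousLinearMap.adjoint (T.tpR h) ∘L S ∘L T.tpR h' with hYdef
    have hY : ∀ (k k' : K),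
        (inner ℂ k (Y k') : ℂ) = (inner ℂ (T.tp h k) (S (T.tp h' k')) : ℂ) := by
      intro k k'
      simp only [hYdef, ContinuousLinearMap.comp_apply]
      rw [ContinuousLinearMap.adjoint_inner_right]
      rfl
    have hYc : Y ∈ Set.centralizer M := by
      intro m hm
      ext k'
      apply ext_inner_left ℂ
      intro k
      have e1 : (inner ℂ k ((Y * m) k') : ℂ) = (inner ℂ k ((m * Y) k') : ℂ) := by
        calc (inner ℂ k ((Y * m) k') : ℂ)
            = (inner ℂ (T.tp h k) (S (T.rAct m (T.tp h' k'))) : ℂ) := by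
              rw [ContinuousLinearMap.mul_apply, hY, T.rAct_tp]
          _ = (inner ℂ (T.tp h k) (T.rAct m (S (T.tp h' k'))) : ℂ) := by
              have := congrArg (fun W : L →L[ℂ] L => (inner ℂ (T.tp h k) (W (T.tp h' k')) : ℂ))
                (hS m hm)
              simpa using this
          _ = (inner ℂ (T.rAct (star m) (T.tp h k)) (S (T.tp h' k')) : ℂ) := by
              have hadj : ContinuousLinearMap.adjoint (T.rAct (star m)) = T.rAct m := by
                rw [← ContinuousLinearMap.star_eq_adjoint, ← map_star, star_star]
              rw [← hadj, ContinuousLinearMap.adjoint_inner_right]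
          _ = (inner ℂ (star m k) (Y k') : ℂ) := by rw [T.rAct_tp, hY]
          _ = (inner ℂ k ((m * Y) k') : ℂ) := by
              rw [ContinuousLinearMap.mul_apply, ContinuousLinearMap.star_eq_adjoint,
                ContinuousLinearMap.adjoint_inner_left]
      exact e1.symm
    obtain ⟨c, hc⟩ := hpure hYc
    have hslice : (inner ℂ h (T.slice e S h') : ℂ) = c := by
      rw [T.slice_inner, ← hY, hc]
      simp only [ContinuousLinearMap.smul_apply, ContinuousLinearMap.one_apply,
        inner_smul_right, he, mul_one]
    rw [← hY k k', hc, hslice]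
    simp only [ContinuousLinearMap.smul_apply, ContinuousLinearMap.one_apply,
      inner_smul_right]
  apply T.ext_tp
  intro h h' k k'
  rw [key, T.inner_lAct]

end HilbertTensor


section Main

variable {A B : Type*}
    [NormedRing A] [StarRing A] [CStarRing A] [NormedAlgebra ℂ A] [StarModule ℂ A]
    [CompleteSpace A]
    [NormedRing B] [StarRing B] [CStarRing B] [NormedAlgebra ℂ B] [StarModule ℂ B]
    [CompleteSpace B]
    {Hφ Hψ L : Type*}
    [NormedAddCommGroup Hφ] [InnerProductSpace ℂ Hφ] [CompleteSpace Hφ]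
    [NormedAddCommGroup Hψ] [InnerProductSpace ℂ Hψ] [CompleteSpace Hψ]
    [NormedAddCommGroup L] [InnerProductSpace ℂ L] [CompleteSpace L]

set_option linter.unusedSectionVars false in
theorem main_statement
    (T : HilbertTensor Hφ Hψ L)
    (πφ : A →⋆ₐ[ℂ] (Hφ →L[ℂ] Hφ)) (πψ : B →⋆ₐ[ℂ] (Hψ →L[ℂ] Hψ))
    (hpure : Set.centralizer (Set.range ⇑πψ) ⊆ {y | ∃ c : ℂ, y = c • (1 : Hψ →L[ℂ] Hψ)})
    (ρ σ : A →⋆ₙₐ[ℂ] (Hφ →L[ℂ] Hφ))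
    (hρ : ∀ a, ρ a ∈ Set.centralizer (Set.centralizer (Set.range ⇑πφ)))
    (hσ : ∀ a, σ a ∈ Set.centralizer (Set.centralizer (Set.range ⇑πφ))) :
    {S : L →L[ℂ] L |
        S ∈ Set.centralizer (Set.centralizer
          {w : L →L[ℂ] L | ∃ (a : A) (b : B), w = T.lAct (πφ a) * T.rAct (πψ b)}) ∧
        (∀ (a : A) (b : B),
          S * (T.lAct (ρ a) * T.rAct (πψ b)) = (T.lAct (σ a) * T.rAct (πψ b)) * S) ∧
        T.lAct (σ 1) * S * T.lAct (ρ 1) = S} =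
      ⇑T.lAct '' {R : Hφ →L[ℂ] Hφ |
        R ∈ Set.centralizer (Set.centralizer (Set.range ⇑πφ)) ∧
        (∀ a : A, R * ρ a = σ a * R) ∧ σ 1 * R * ρ 1 = R} := by
  have hR0 : (0 : Hφ →L[ℂ] Hφ) ∈ {R : Hφ →L[ℂ] Hφ |
      R ∈ Set.centralizer (Set.centralizer (Set.range ⇑πφ)) ∧
      (∀ a : A, R * ρ a = σ a * R) ∧ σ 1 * R * ρ 1 = R} := by
    refine ⟨fun m _ => by simp, fun a => by simp, by simp⟩
  rcases subsingleton_or_nontrivial Hψ with hsub | hnt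
  · -- degenerate case: Hψ = 0, hence L = 0
    have hLsub : Subsingleton L := by
      have hd : Dense ({0} : Set L) := by
        have : {z : L | ∃ h k, z = T.tp h k} ⊆ {0} := by
          rintro z ⟨h, k, rfl⟩
          have : k = 0 := Subsingleton.elim _ _
          simp [this]
        have h1 : (Submodule.span ℂ {z : L | ∃ h k, z = T.tp h k} : Set L) ⊆ {0} := by
          intro x hx
          have hb : Submodule.span ℂ {z : L | ∃ h k, z = T.tp h k} ≤ ⊥ :=
            Submodule.span_le.2 fun z hz => (Submodule.mem_bot ℂ).2 (this hz)
          exact (Submodule.mem_bot ℂ).1 (hb hx)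
        exact Dense.mono h1 T.dense_span
      constructor
      intro x y
      have hx : x ∈ closure ({0} : Set L) := hd x
      have hy : y ∈ closure ({0} : Set L) := hd y
      rw [closure_singleton] at hx hy
      simp only [Set.mem_singleton_iff] at hx hy
      rw [hx, hy]
    have : Subsingleton (L →L[ℂ] L) := ⟨fun f g => ContinuousLinearMap.ext fun x =>
      Subsingleton.elim _ _⟩
    ext S
    simp only [Set.mem_setOf_eq, Set.mem_image]
    constructor
    · intro _
      exact ⟨0, hR0, Subsingleton.elim _ _⟩
    · intro _
      refine ⟨fun m _ => Subsingleton.elim _ _, fun a b => Subsingleton.elim _ _,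
        Subsingleton.elim _ _⟩
  · -- nondegenerate case: pick a unit vector e in Hψ
    obtain ⟨k0, hk0⟩ := exists_ne (0 : Hψ)
    set e : Hψ := ((‖k0‖ : ℂ))⁻¹ • k0 with he_def
    have hnk0 : (‖k0‖ : ℂ) ≠ 0 := by
      simpa using (norm_ne_zero_iff.mpr hk0)
    have he : (inner ℂ e e : ℂ) = 1 := by
      rw [he_def, inner_smul_left, inner_smul_right, inner_self_eq_norm_sq_to_K]
      rw [map_inv₀, Complex.conj_ofReal]
      field_simp
      norm_cast
    have hinj : ∀ {R R' : Hφ →L[ℂ] Hφ}, T.lAct R = T.lAct R' → R = R' :=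
      fun hRR => T.lAct_injective he hRR
    have hcomm := T.lr_comm
    ext S
    simp only [Set.mem_setOf_eq, Set.mem_image]
    constructor
    · rintro ⟨hS1, hS2, hS3⟩
      -- S commutes with all 1 ⊗ πψ(b)
      have hσ1S : T.lAct (σ 1) * S = S := by
        conv_lhs => rw [← hS3]
        rw [← mul_assoc, ← mul_assoc, ← map_mul]
        have : (σ 1 : Hφ →L[ℂ] Hφ) * σ 1 = σ 1 := by rw [← map_mul, one_mul]
        rw [this, hS3]
      have hSρ1 : S * T.lAct (ρ 1) = S := by
        conv_lhs => rw [← hS3]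
        rw [mul_assoc, ← map_mul]
        have : (ρ 1 : Hφ →L[ℂ] Hφ) * ρ 1 = ρ 1 := by rw [← map_mul, one_mul]
        rw [this, hS3]
      have hScomm : ∀ m ∈ Set.range ⇑πψ, S * T.rAct m = T.rAct m * S := by
        rintro m ⟨b, rfl⟩
        calc S * T.rAct (πψ b)
            = S * T.lAct (ρ 1) * T.rAct (πψ b) := by rw [hSρ1]
          _ = S * (T.lAct (ρ 1) * T.rAct (πψ b)) := by rw [mul_assoc]
          _ = T.lAct (σ 1) * T.rAct (πψ b) * S := hS2 1 b
          _ = T.rAct (πψ b) * T.lAct (σ 1) * S := by rw [hcomm]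
          _ = T.rAct (πψ b) * S := by rw [mul_assoc, hσ1S]
      have hSeq : S = T.lAct (T.slice e S) := T.eq_lAct_slice hpure he hScomm
      set R := T.slice e S with hRdef
      refine ⟨R, ⟨?_, ?_, ?_⟩, hSeq.symm⟩
      · -- R ∈ πφ(A)''
        intro x hx
        have hxW : T.lAct x ∈ Set.centralizer
            {w : L →L[ℂ] L | ∃ (a : A) (b : B), w = T.lAct (πφ a) * T.rAct (πψ b)} := by
          rintro w ⟨a, b, rfl⟩
          have hxa : πφ a * x = x * πφ a := hx (πφ a) ⟨a, rfl⟩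
          calc T.lAct (πφ a) * T.rAct (πψ b) * T.lAct x
              = T.lAct (πφ a) * (T.lAct x * T.rAct (πψ b)) := by
                rw [mul_assoc, ← hcomm]
            _ = T.lAct (πφ a * x) * T.rAct (πψ b) := by rw [← mul_assoc, ← map_mul]
            _ = T.lAct x * (T.lAct (πφ a) * T.rAct (πψ b)) := by
                rw [hxa, map_mul, mul_assoc]
        have := hS1 (T.lAct x) hxW
        -- T.lAct x * S = S * T.lAct x
        rw [hSeq, ← map_mul, ← map_mul] at this
        exact hinj this
      · intro a
        have := hS2 a 1
        rw [map_one, map_one, mul_one, mul_one] at this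
        rw [hSeq, ← map_mul, ← map_mul] at this
        exact hinj this
      · have := hS3
        rw [hSeq, ← map_mul, ← map_mul] at this
        exact hinj this
    · rintro ⟨R, ⟨hR1, hR2, hR3⟩, rfl⟩
      refine ⟨?_, ?_, ?_⟩
      · -- lAct R ∈ π(A⊗B)''
        intro V hV
        -- V commutes with all 1 ⊗ πψ(b) and all πφ(a) ⊗ 1
        have hVr : ∀ m ∈ Set.range ⇑πψ, V * T.rAct m = T.rAct m * V := by
          rintro m ⟨b, rfl⟩
          have hmem : T.rAct (πψ b) ∈
              {w : L →L[ℂ] L | ∃ (a : A) (b : B), w = T.lAct (πφ a) * T.rAct (πψ b)} :=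
            ⟨1, b, by rw [map_one, map_one, one_mul]⟩
          exact (hV _ hmem).symm
        have hVeq : V = T.lAct (T.slice e V) := T.eq_lAct_slice hpure he hVr
        set X := T.slice e V with hXdef
        have hXφ : X ∈ Set.centralizer (Set.range ⇑πφ) := by
          rintro m ⟨a, rfl⟩
          have hmem : T.lAct (πφ a) ∈
              {w : L →L[ℂ] L | ∃ (a : A) (b : B), w = T.lAct (πφ a) * T.rAct (πψ b)} :=
            ⟨a, 1, by rw [map_one, map_one, mul_one]⟩
          have := hV _ hmem
          rw [hVeq, ← map_mul, ← map_mul] at this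
          exact hinj this
        have hXR : X * R = R * X := hR1 X hXφ
        rw [hVeq, ← map_mul, ← map_mul, hXR]
      · intro a b
        calc T.lAct R * (T.lAct (ρ a) * T.rAct (πψ b))
            = T.lAct (R * ρ a) * T.rAct (πψ b) := by rw [← mul_assoc, ← map_mul]
          _ = T.lAct (σ a * R) * T.rAct (πψ b) := by rw [hR2]
          _ = T.lAct (σ a) * (T.lAct R * T.rAct (πψ b)) := by rw [map_mul, mul_assoc]
          _ = T.lAct (σ a) * (T.rAct (πψ b) * T.lAct R) := by rw [hcomm]
          _ = T.lAct (σ a) * T.rAct (πψ b) * T.lAct R := by rw [mul_assoc]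
      · rw [← map_mul, ← map_mul, hR3]

end Main


theorem stabilized_intertwiner_space
    {A B : Type*}
    [NormedRing A] [StarRing A] [CStarRing A] [NormedAlgebra ℂ A] [StarModule ℂ A]
    [CompleteSpace A]
    [NormedRing B] [StarRing B] [CStarRing B] [NormedAlgebra ℂ B] [StarModule ℂ B]
    [CompleteSpace B]
    {Hφ Hψ L : Type*}
    [NormedAddCommGroup Hφ] [InnerProductSpace ℂ Hφ] [CompleteSpace Hφ]
    [NormedAddCommGroup Hψ] [InnerProductSpace ℂ Hψ] [CompleteSpace Hψ]
    [NormedAddCommGroup L] [InnerProductSpace ℂ L] [CompleteSpace L]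
    (T : HilbertTensor Hφ Hψ L)
    -- GNS representations of the states φ and ψ
    (φ : A →ₗ[ℂ] ℂ) (ψ : B →ₗ[ℂ] ℂ)
    (πφ : A →⋆ₐ[ℂ] (Hφ →L[ℂ] Hφ)) (πψ : B →⋆ₐ[ℂ] (Hψ →L[ℂ] Hψ))
    (Ωφ : Hφ) (Ωψ : Hψ)
    (hφ : ∀ a, φ a = (inner ℂ Ωφ (πφ a Ωφ) : ℂ))
    (hψ : ∀ b, ψ b = (inner ℂ Ωψ (πψ b Ωψ) : ℂ))
    (hcycφ : Dense (Submodule.span ℂ (Set.range (fun a => πφ a Ωφ)) : Set Hφ))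
    (hcycψ : Dense (Submodule.span ℂ (Set.range (fun b => πψ b Ωψ)) : Set Hψ))
    -- ψ is pure: its GNS representation is irreducible
    (hpure : Set.centralizer (Set.range ⇑πψ) ⊆ {y | ∃ c : ℂ, y = c • (1 : Hψ →L[ℂ] Hψ)})
    -- ρ, σ are representations of A on H_φ with ranges in π_φ(A)'"'"''"'"'
    (ρ σ : A →⋆ₙₐ[ℂ] (Hφ →L[ℂ] Hφ))
    (hρ : ∀ a, ρ a ∈ Set.centralizer (Set.centralizer (Set.range ⇑πφ)))
    (hσ : ∀ a, σ a ∈ Set.centralizer (Set.centralizer (Set.range ⇑πφ))) :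
    -- the intertwiner space between ρ̂ and σ̂ in π(A ⊗ B)'"'"''"'"' ...
    {S : L →L[ℂ] L |
        S ∈ Set.centralizer (Set.centralizer
          {w : L →L[ℂ] L | ∃ (a : A) (b : B), w = T.lAct (πφ a) * T.rAct (πψ b)}) ∧
        (∀ (a : A) (b : B),
          S * (T.lAct (ρ a) * T.rAct (πψ b)) = (T.lAct (σ a) * T.rAct (πψ b)) * S) ∧
        T.lAct (σ 1) * S * T.lAct (ρ 1) = S} =
      -- ... equals the image under x ↦ x ⊗ 1 of the intertwiner space between ρ and σ
      ⇑T.lAct '' {R : Hφ →L[ℂ] Hφ |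
        R ∈ Set.centralizer (Set.centralizer (Set.range ⇑πφ)) ∧
        (∀ a : A, R * ρ a = σ a * R) ∧ σ 1 * R * ρ 1 = R} := by
  exact main_statement T πφ πψ hpure ρ σ hρ hσ
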